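/- In A(S⁷_q), let x₀ := z₂z₂* + z₄z₄*, x₁ := q(z₁z₂* + z₃z₄*), x₂ := z₂z₃ − qz₁z₄. Then these elements satisfy: x₀x_i = q^{2i}x_ix₀ (i = 1,2), x₁x₂ = x₂x₁, x₁*x₂ = q⁴x₂x₁*, x_i*x_i − q⁴x_ix_i* = (1 − q^{2i})(q²x₀)^i, and x₀² + x₁x₁* + x₂x₂* = x₀, where x₀ = x₀*. -/

import Mathlib

set_option maxHeartbeats 4000000

open Matrix

private lemma shiftr {R : Type*} [Ring R] {X Y Z : R} (h : X * Y = Z) (t : R) :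
    X * (Y * t) = Z * t := by rw [← mul_assoc, h]

theorem stmt8 (R : Type*) [Ring R] [StarRing R] [Algebra ℝ R] [StarModule ℝ R]
    (q : ℝ) (hq : 0 < q ∧ q < 1) (z₁ z₂ z₃ z₄ : R)
    (h12 : z₁ * z₂ = q⁻¹ • (z₂ * z₁))
    (h13 : z₁ * z₃ = q⁻¹ • (z₃ * z₁))
    (h14 : z₁ * z₄ = (q⁻¹ ^ 2) • (z₄ * z₁))
    (h24 : z₂ * z₄ = q⁻¹ • (z₄ * z₂))
    (h34 : z₃ * z₄ = q⁻¹ • (z₄ * z₃))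
    (h24s : z₂ * star z₄ = q⁻¹ • (star z₄ * z₂))
    (h34s : z₃ * star z₄ = q⁻¹ • (star z₄ * z₃))
    (h14s : z₁ * star z₄ = (q⁻¹ ^ 2) • (star z₄ * z₁))
    (h23s : z₂ * star z₃ = (q⁻¹ ^ 2) • (star z₃ * z₂))
    (h23 : z₂ * z₃ - (q ^ 2) • (z₃ * z₂) = (q * (1 - q ^ 2)) • (z₁ * z₄))
    (h12s : z₁ * star z₂ - q⁻¹ • (star z₂ * z₁) = (q - q⁻¹) • (star z₄ * z₃))
    (h13s : z₁ * star z₃ - q⁻¹ • (star z₃ * z₁) = (q * (1 - q ^ 2)) • (star z₄ * z₂))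
    (h44 : star z₄ * z₄ = z₄ * star z₄)
    (h22 : star z₂ * z₂ - z₂ * star z₂ = (1 - q ^ 2) • (z₄ * star z₄))
    (h33 : star z₃ * z₃ - z₃ * star z₃ = star z₂ * z₂ - (q ^ 4) • (z₂ * star z₂))
    (hsph₁ : z₁ * star z₁ + z₂ * star z₂ + z₃ * star z₃ + z₄ * star z₄ = 1)
    (hsph₂ : star z₁ * z₁ + (q ^ 6) • (star z₂ * z₂) + (q ^ 2) • (star z₃ * z₃)
        + (q ^ 8) • (star z₄ * z₄) = 1)
    (x₀ x₁ x₂ : R)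
    (hx₀ : x₀ = z₂ * star z₂ + z₄ * star z₄)
    (hx₁ : x₁ = q • (z₁ * star z₂ + z₃ * star z₄))
    (hx₂ : x₂ = z₂ * z₃ - q • (z₁ * z₄)) :
    star x₀ = x₀
    ∧ x₀ * x₁ = (q ^ 2) • (x₁ * x₀)
    ∧ x₀ * x₂ = (q ^ 4) • (x₂ * x₀)
    ∧ x₁ * x₂ = x₂ * x₁
    ∧ star x₁ * x₂ = (q ^ 4) • (x₂ * star x₁)
    ∧ star x₁ * x₁ - (q ^ 4) • (x₁ * star x₁) = (1 - q ^ 2) • ((q ^ 2) • x₀)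
    ∧ star x₂ * x₂ - (q ^ 4) • (x₂ * star x₂) = (1 - q ^ 4) • (((q ^ 2) • x₀) ^ 2)
    ∧ x₀ ^ 2 + x₁ * star x₁ + x₂ * star x₂ = x₀ := by
  obtain ⟨hqpos, -⟩ := hq
  have hq0 : q ≠ 0 := ne_of_gt hqpos
  subst hx₀ hx₁ hx₂
  -- starred versions of the hypotheses
  have hs12 : star z₂ * star z₁ = q⁻¹ • (star z₁ * star z₂) := by
    have h := congrArg star h12; simpa using h
  have hs13 : star z₃ * star z₁ = q⁻¹ • (star z₁ * star z₃) := by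
    have h := congrArg star h13; simpa using h
  have hs14 : star z₄ * star z₁ = (q⁻¹ ^ 2) • (star z₁ * star z₄) := by
    have h := congrArg star h14; simpa using h
  have hs24 : star z₄ * star z₂ = q⁻¹ • (star z₂ * star z₄) := by
    have h := congrArg star h24; simpa using h
  have hs34 : star z₄ * star z₃ = q⁻¹ • (star z₃ * star z₄) := by
    have h := congrArg star h34; simpa using h
  have hs24s : z₄ * star z₂ = q⁻¹ • (star z₂ * z₄) := by
    have h := congrArg star h24s; simpa using h
  have hs34s : z₄ * star z₃ = q⁻¹ • (star z₃ * z₄) := by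
    have h := congrArg star h34s; simpa using h
  have hs14s : z₄ * star z₁ = (q⁻¹ ^ 2) • (star z₁ * z₄) := by
    have h := congrArg star h14s; simpa using h
  have hs23s : z₃ * star z₂ = (q⁻¹ ^ 2) • (star z₂ * z₃) := by
    have h := congrArg star h23s; simpa using h
  have hs23 : star z₃ * star z₂ - (q ^ 2) • (star z₂ * star z₃)
      = (q * (1 - q ^ 2)) • (star z₄ * star z₁) := by
    have h := congrArg star h23; simpa using h
  have hs12s : z₂ * star z₁ - q⁻¹ • (star z₁ * z₂) = (q - q⁻¹) • (star z₃ * z₄) := by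
    have h := congrArg star h12s; simpa using h
  have hs13s : z₃ * star z₁ - q⁻¹ • (star z₁ * z₃) = (q * (1 - q ^ 2)) • (star z₂ * z₄) := by
    have h := congrArg star h13s; simpa using h
  -- reoriented rewrite rules
  have r_ba : z₂ * z₁ = q • (z₁ * z₂) := by
    linear_combination (norm := match_scalars <;> field_simp <;> ring) (-q : ℝ) • h12
  have r_ca : z₃ * z₁ = q • (z₁ * z₃) := by
    linear_combination (norm := match_scalars <;> field_simp <;> ring) (-q : ℝ) • h13
  have r_da : z₄ * z₁ = (q ^ 2) • (z₁ * z₄) := by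
    linear_combination (norm := match_scalars <;> field_simp <;> ring) (-(q ^ 2) : ℝ) • h14
  have r_db : z₄ * z₂ = q • (z₂ * z₄) := by
    linear_combination (norm := match_scalars <;> field_simp <;> ring) (-q : ℝ) • h24
  have r_dc : z₄ * z₃ = q • (z₃ * z₄) := by
    linear_combination (norm := match_scalars <;> field_simp <;> ring) (-q : ℝ) • h34
  have r_cb : z₃ * z₂ = ((q ^ 2)⁻¹) • (z₂ * z₃) - ((1 - q ^ 2) / q) • (z₁ * z₄) := by
    linear_combination (norm := match_scalars <;> field_simp <;> ring) (-(q ^ 2)⁻¹ : ℝ) • h23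
  have r_Db : star z₄ * z₂ = q • (z₂ * star z₄) := by
    linear_combination (norm := match_scalars <;> field_simp <;> ring) (-q : ℝ) • h24s
  have r_Dc : star z₄ * z₃ = q • (z₃ * star z₄) := by
    linear_combination (norm := match_scalars <;> field_simp <;> ring) (-q : ℝ) • h34s
  have r_Da : star z₄ * z₁ = (q ^ 2) • (z₁ * star z₄) := by
    linear_combination (norm := match_scalars <;> field_simp <;> ring) (-(q ^ 2) : ℝ) • h14s
  have r_Cb : star z₃ * z₂ = (q ^ 2) • (z₂ * star z₃) := by
    linear_combination (norm := match_scalars <;> field_simp <;> ring) (-(q ^ 2) : ℝ) • h23s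
  have r_Ba : star z₂ * z₁ = q • (z₁ * star z₂) + (q * (1 - q ^ 2)) • (z₃ * star z₄) := by
    linear_combination (norm := match_scalars <;> field_simp <;> ring)
      (-q : ℝ) • h12s + ((1 - q ^ 2 : ℝ)) • r_Dc
  have r_Ca : star z₃ * z₁ = q • (z₁ * star z₃) - (q ^ 3 * (1 - q ^ 2)) • (z₂ * star z₄) := by
    linear_combination (norm := match_scalars <;> field_simp <;> ring)
      (-q : ℝ) • h13s - ((q ^ 2 * (1 - q ^ 2) : ℝ)) • r_Db
  have r_Bb : star z₂ * z₂ = z₂ * star z₂ + (1 - q ^ 2) • (z₄ * star z₄) := by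
    linear_combination (norm := match_scalars <;> field_simp <;> ring) h22
  have r_Cc : star z₃ * z₃ = z₃ * star z₃ + (1 - q ^ 4) • (z₂ * star z₂)
      + (1 - q ^ 2) • (z₄ * star z₄) := by
    linear_combination (norm := match_scalars <;> field_simp <;> ring) h33 + h22
  have r_Aa : star z₁ * z₁ = 1 - (q ^ 2) • (z₂ * star z₂) - (q ^ 2) • (z₃ * star z₃)
      - (q ^ 2 - q ^ 4 + q ^ 6) • (z₄ * star z₄) := by
    linear_combination (norm := match_scalars <;> field_simp <;> ring)
      hsph₂ - (q ^ 6 : ℝ) • r_Bb - (q ^ 2 : ℝ) • r_Cc - (q ^ 8 : ℝ) • h44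
  have r_Bc : star z₂ * z₃ = (q ^ 2) • (z₃ * star z₂) := by
    linear_combination (norm := match_scalars <;> field_simp <;> ring) (-(q ^ 2) : ℝ) • hs23s
  have r_Bd : star z₂ * z₄ = q • (z₄ * star z₂) := by
    linear_combination (norm := match_scalars <;> field_simp <;> ring) (-q : ℝ) • hs24s
  have r_Cd : star z₃ * z₄ = q • (z₄ * star z₃) := by
    linear_combination (norm := match_scalars <;> field_simp <;> ring) (-q : ℝ) • hs34s
  have r_Ad : star z₁ * z₄ = (q ^ 2) • (z₄ * star z₁) := by
    linear_combination (norm := match_scalars <;> field_simp <;> ring) (-(q ^ 2) : ℝ) • hs14s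
  have r_Ab : star z₁ * z₂ = q • (z₂ * star z₁) + (q * (1 - q ^ 2)) • (z₄ * star z₃) := by
    linear_combination (norm := match_scalars <;> field_simp <;> ring)
      (-q : ℝ) • hs12s + ((1 - q ^ 2 : ℝ)) • r_Cd
  have r_Ac : star z₁ * z₃ = q • (z₃ * star z₁) - (q ^ 3 * (1 - q ^ 2)) • (z₄ * star z₂) := by
    linear_combination (norm := match_scalars <;> field_simp <;> ring)
      (-q : ℝ) • hs13s - ((q ^ 2 * (1 - q ^ 2) : ℝ)) • r_Bd
  have r_AB : star z₁ * star z₂ = q • (star z₂ * star z₁) := by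
    linear_combination (norm := match_scalars <;> field_simp <;> ring) (-q : ℝ) • hs12
  have r_AC : star z₁ * star z₃ = q • (star z₃ * star z₁) := by
    linear_combination (norm := match_scalars <;> field_simp <;> ring) (-q : ℝ) • hs13
  have r_AD : star z₁ * star z₄ = (q ^ 2) • (star z₄ * star z₁) := by
    linear_combination (norm := match_scalars <;> field_simp <;> ring) (-(q ^ 2) : ℝ) • hs14
  have r_BD : star z₂ * star z₄ = q • (star z₄ * star z₂) := by
    linear_combination (norm := match_scalars <;> field_simp <;> ring) (-q : ℝ) • hs24
  have r_CD : star z₃ * star z₄ = q • (star z₄ * star z₃) := by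
    linear_combination (norm := match_scalars <;> field_simp <;> ring) (-q : ℝ) • hs34
  have r_BC : star z₂ * star z₃ = ((q ^ 2)⁻¹) • (star z₃ * star z₂)
      - ((1 - q ^ 2) / q) • (star z₄ * star z₁) := by
    linear_combination (norm := match_scalars <;> field_simp <;> ring) (-(q ^ 2)⁻¹ : ℝ) • hs23
  refine ⟨?_, ?_, ?_, ?_, ?_, ?_, ?_, ?_⟩
  · simp [star_add, StarMul.star_mul, star_star]
  · simp only [star_add, star_sub, StarMul.star_mul, star_smul, star_star, star_trivial, star_one, pow_two, mul_add, add_mul, mul_sub, sub_mul, smul_add, smul_sub, smul_smul, smul_mul_assoc, mul_smul_comm, mul_assoc, mul_one, one_mul, r_ba, r_ca, r_da, r_db, r_dc, r_cb, r_Db, r_Dc, r_Da, r_Cb, r_Ba, r_Ca, h44, r_Bb, r_Cc, r_Aa, r_Bc, r_Bd, r_Cd, r_Ad, r_Ab, r_Ac, r_AB, r_AC, r_AD, r_BD, r_CD, r_BC, shiftr r_ba, shiftr r_ca, shiftr r_da, shiftr r_db, shiftr r_dc, shiftr r_cb, shiftr r_Db, shiftr r_Dc, shiftr r_Da, shiftr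 r_Cb, shiftr r_Ba, shiftr r_Ca, shiftr h44, shiftr r_Bb, shiftr r_Cc, shiftr r_Aa, shiftr r_Bc, shiftr r_Bd, shiftr r_Cd, shiftr r_Ad, shiftr r_Ab, shiftr r_Ac, shiftr r_AB, shiftr r_AC, shiftr r_AD, shiftr r_BD, shiftr r_CD, shiftr r_BC]
    match_scalars <;> field_simp <;> ring
  · simp only [star_add, star_sub, StarMul.star_mul, star_smul, star_star, star_trivial, star_one, pow_two, mul_add, add_mul, mul_sub, sub_mul, smul_add, smul_sub, smul_smul, smul_mul_assoc, mul_smul_comm, mul_assoc, mul_one, one_mul, r_ba, r_ca, r_da, r_db, r_dc, r_cb, r_Db, r_Dc, r_Da, r_Cb, r_Ba, r_Ca, h44, r_Bb, r_Cc, r_Aa, r_Bc, r_Bd, r_Cd, r_Ad, r_Ab, r_Ac, r_AB, r_AC, r_AD, r_BD, r_CD, r_BC, shiftr r_ba, shiftr r_ca, shiftr r_da, shiftr r_db, shiftr r_dc, shiftr r_cb, shiftr r_Db, shiftr r_Dc, shiftr r_Da, shiftr r_Cb, shiftr r_Ba, shiftr r_Ca, shiftr h44, shiftr r_Bb, shiftr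 r_Cc, shiftr r_Aa, shiftr r_Bc, shiftr r_Bd, shiftr r_Cd, shiftr r_Ad, shiftr r_Ab, shiftr r_Ac, shiftr r_AB, shiftr r_AC, shiftr r_AD, shiftr r_BD, shiftr r_CD, shiftr r_BC]
    match_scalars <;> field_simp <;> ring
  · simp only [star_add, star_sub, StarMul.star_mul, star_smul, star_star, star_trivial, star_one, pow_two, mul_add, add_mul, mul_sub, sub_mul, smul_add, smul_sub, smul_smul, smul_mul_assoc, mul_smul_comm, mul_assoc, mul_one, one_mul, r_ba, r_ca, r_da, r_db, r_dc, r_cb, r_Db, r_Dc, r_Da, r_Cb, r_Ba, r_Ca, h44, r_Bb, r_Cc, r_Aa, r_Bc, r_Bd, r_Cd, r_Ad, r_Ab, r_Ac, r_AB, r_AC, r_AD, r_BD, r_CD, r_BC, shiftr r_ba, shiftr r_ca, shiftr r_da, shiftr r_db, shiftr r_dc, shiftr r_cb, shiftr r_Db, shiftr r_Dc, shiftr r_Da, shiftr r_Cb, shiftr r_Ba, shiftr r_Ca, shiftr h44, shiftr r_Bb, shiftr r_Cc, shiftr r_Aa, shiftr r_Bc, shiftr r_Bd, shiftr r_Cd,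 shiftr r_Ad, shiftr r_Ab, shiftr r_Ac, shiftr r_AB, shiftr r_AC, shiftr r_AD, shiftr r_BD, shiftr r_CD, shiftr r_BC]
    match_scalars <;> field_simp <;> ring
  · calc star (q • (z₁ * star z₂ + z₃ * star z₄)) * (z₂ * z₃ - q • (z₁ * z₄))
        = (q ^ 4) • ((z₂ * z₃ - q • (z₁ * z₄)) * star (q • (z₁ * star z₂ + z₃ * star z₄)))
          + (q ^ 2) • (z₂ * ((z₁ * star z₁ + z₂ * star z₂ + z₃ * star z₃ + z₄ * star z₄) * z₄) - z₂ * (1 * z₄)) := by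
          simp only [star_add, star_sub, StarMul.star_mul, star_smul, star_star, star_trivial, star_one, pow_two, mul_add, add_mul, mul_sub, sub_mul, smul_add, smul_sub, smul_smul, smul_mul_assoc, mul_smul_comm, mul_assoc, mul_one, one_mul, r_ba, r_ca, r_da, r_db, r_dc, r_cb, r_Db, r_Dc, r_Da, r_Cb, r_Ba, r_Ca, h44, r_Bb, r_Cc, r_Aa, r_Bc, r_Bd, r_Cd, r_Ad, r_Ab, r_Ac, r_AB, r_AC, r_AD, r_BD, r_CD, r_BC, shiftr r_ba, shiftr r_ca, shiftr r_da, shiftr r_db, shiftr r_dc, shiftr r_cb, shiftr r_Db, shiftr r_Dc, shiftr r_Da, shiftr r_Cb, shiftr r_Ba, shiftr r_Ca, shiftr h44, shiftr r_Bb, shiftr r_Cc, shiftr r_Aa, shiftr r_Bc, shiftr r_Bd, shiftr r_Cd, shiftr r_Ad, shiftr r_Ab, shiftr r_Ac, shiftr r_AB, shiftr r_AC, shiftr r_AD, shiftr r_BD, shiftr r_CD, shiftr r_BC]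
          match_scalars <;> field_simp <;> ring
      _ = _ := by rw [hsph₁]; simp
  · calc star (q • (z₁ * star z₂ + z₃ * star z₄)) * (q • (z₁ * star z₂ + z₃ * star z₄))
          - (q ^ 4) • (q • (z₁ * star z₂ + z₃ * star z₄)
            * star (q • (z₁ * star z₂ + z₃ * star z₄)))
        = (1 - q ^ 2) • ((q ^ 2) • (z₂ * star z₂ + z₄ * star z₄))
          + (-(q ^ 4)) • (z₂ * ((z₁ * star z₁ + z₂ * star z₂ + z₃ * star z₃ + z₄ * star z₄) * star z₂) - z₂ * (1 * star z₂)) + (q ^ 2 - q ^ 4) • (z₄ * ((z₁ * star z₁ + z₂ * star z₂ + z₃ * star z₃ + z₄ * star z₄) * star z₄) - z₄ * (1 * star z₄)) := by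
          simp only [star_add, star_sub, StarMul.star_mul, star_smul, star_star, star_trivial, star_one, pow_two, mul_add, add_mul, mul_sub, sub_mul, smul_add, smul_sub, smul_smul, smul_mul_assoc, mul_smul_comm, mul_assoc, mul_one, one_mul, r_ba, r_ca, r_da, r_db, r_dc, r_cb, r_Db, r_Dc, r_Da, r_Cb, r_Ba, r_Ca, h44, r_Bb, r_Cc, r_Aa, r_Bc, r_Bd, r_Cd, r_Ad, r_Ab, r_Ac, r_AB, r_AC, r_AD, r_BD, r_CD, r_BC, shiftr r_ba, shiftr r_ca, shiftr r_da, shiftr r_db, shiftr r_dc, shiftr r_cb, shiftr r_Db, shiftr r_Dc, shiftr r_Da, shiftr r_Cb, shiftr r_Ba, shiftr r_Ca, shiftr h44, shiftr r_Bb, shiftr r_Cc, shiftr r_Aa, shiftr r_Bc, shiftr r_Bd, shiftr r_Cd, shiftr r_Ad, shiftr r_Ab, shiftr r_Ac, shiftr r_AB, shiftr r_AC, shiftr r_AD, shiftr r_BD, shiftr r_CD, shiftr r_BC]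
          match_scalars <;> field_simp <;> ring
      _ = _ := by rw [hsph₁]; simp
  · calc star (z₂ * z₃ - q • (z₁ * z₄)) * (z₂ * z₃ - q • (z₁ * z₄))
          - (q ^ 4) • ((z₂ * z₃ - q • (z₁ * z₄)) * star (z₂ * z₃ - q • (z₁ * z₄)))
        = (1 - q ^ 4) • (((q ^ 2) • (z₂ * star z₂ + z₄ * star z₄)) ^ 2)
          + (-(q ^ 2)) • (z₄ * ((z₁ * star z₁ + z₂ * star z₂ + z₃ * star z₃ + z₄ * star z₄) * star z₄) - z₄ * (1 * star z₄)) := by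
          simp only [star_add, star_sub, StarMul.star_mul, star_smul, star_star, star_trivial, star_one, pow_two, mul_add, add_mul, mul_sub, sub_mul, smul_add, smul_sub, smul_smul, smul_mul_assoc, mul_smul_comm, mul_assoc, mul_one, one_mul, r_ba, r_ca, r_da, r_db, r_dc, r_cb, r_Db, r_Dc, r_Da, r_Cb, r_Ba, r_Ca, h44, r_Bb, r_Cc, r_Aa, r_Bc, r_Bd, r_Cd, r_Ad, r_Ab, r_Ac, r_AB, r_AC, r_AD, r_BD, r_CD, r_BC, shiftr r_ba, shiftr r_ca, shiftr r_da, shiftr r_db, shiftr r_dc, shiftr r_cb, shiftr r_Db, shiftr r_Dc, shiftr r_Da, shiftr r_Cb, shiftr r_Ba, shiftr r_Ca, shiftr h44, shiftr r_Bb, shiftr r_Cc, shiftr r_Aa, shiftr r_Bc, shiftr r_Bd, shiftr r_Cd, shiftr r_Ad, shiftr r_Ab, shiftr r_Ac, shiftr r_AB, shiftr r_AC, shiftr r_AD, shiftr r_BD, shiftr r_CD, shiftr r_BC]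
          match_scalars <;> field_simp <;> ring
      _ = _ := by rw [hsph₁]; simp
  · calc (z₂ * star z₂ + z₄ * star z₄) ^ 2
          + q • (z₁ * star z₂ + z₃ * star z₄) * star (q • (z₁ * star z₂ + z₃ * star z₄))
          + (z₂ * z₃ - q • (z₁ * z₄)) * star (z₂ * z₃ - q • (z₁ * z₄))
        = (z₂ * star z₂ + z₄ * star z₄) + (z₂ * ((z₁ * star z₁ + z₂ * star z₂ + z₃ * star z₃ + z₄ * star z₄) * star z₂) - z₂ * (1 * star z₂)) + (z₄ * ((z₁ * star z₁ + z₂ * star z₂ + z₃ * star z₃ + z₄ * star z₄) * star z₄) - z₄ * (1 * star z₄)) := by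
          simp only [star_add, star_sub, StarMul.star_mul, star_smul, star_star, star_trivial, star_one, pow_two, mul_add, add_mul, mul_sub, sub_mul, smul_add, smul_sub, smul_smul, smul_mul_assoc, mul_smul_comm, mul_assoc, mul_one, one_mul, r_ba, r_ca, r_da, r_db, r_dc, r_cb, r_Db, r_Dc, r_Da, r_Cb, r_Ba, r_Ca, h44, r_Bb, r_Cc, r_Aa, r_Bc, r_Bd, r_Cd, r_Ad, r_Ab, r_Ac, r_AB, r_AC, r_AD, r_BD, r_CD, r_BC, shiftr r_ba, shiftr r_ca, shiftr r_da, shiftr r_db, shiftr r_dc, shiftr r_cb, shiftr r_Db, shiftr r_Dc, shiftr r_Da, shiftr r_Cb, shiftr r_Ba, shiftr r_Ca, shiftr h44, shiftr r_Bb, shiftr r_Cc, shiftr r_Aa, shiftr r_Bc, shiftr r_Bd, shiftr r_Cd, shiftr r_Ad, shiftr r_Ab, shiftr r_Ac, shiftr r_AB, shiftr r_AC, shiftr r_AD, shiftr r_BD, shiftr r_CD, shiftr r_BC]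
          match_scalars <;> field_simp <;> ring
      _ = _ := by rw [hsph₁]; simp
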